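/- For S₁ = [[1, 1/√2],[0, 1]] and S₂ = [[1, √3/2],[-1, -√3/2]], one has S₂ = u vᵀ with u = (1,-1)ᵀ, v = (1, √3/2)ᵀ, S₂^m = (1 - √3/2)^{m-1} S₂ for all m ≥ 1, and ρ(S₁^ℓ S₂^m) = (ℓ/√2 + √3/2 - 1)·(1 - √3/2)^{m-1} for all ℓ ≥ 1, m ≥ 1, where ρ is the spectral radius. -/

import Mathlib

open Matrix

/-- The spectral radius of a real square matrix: the maximum of the moduli of its
complex eigenvalues. -/
noncomputable def specRad {d : ℕ} (A : Matrix (Fin d) (Fin d) ℝ) : ENNReal :=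
  spectralRadius ℂ (A.map (Complex.ofReal))

lemma specRad_fin_two_of_det_eq_zero (A : Matrix (Fin 2) (Fin 2) ℝ) (hdet : A.det = 0) :
    specRad A = ENNReal.ofReal |A.trace| := by
  have hd : (A 0 0 : ℂ) * A 1 1 - A 0 1 * A 1 0 = 0 := by
    rw [Matrix.det_fin_two] at hdet
    exact_mod_cast congrArg (Complex.ofReal) hdet
  have ht : ((A.trace : ℂ)) = (A 0 0 : ℂ) + A 1 1 := by
    rw [Matrix.trace_fin_two]; push_cast; ring
  have hspec : spectrum ℂ (A.map Complex.ofReal) = {0, (A.trace : ℂ)} := by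
    ext z
    rw [spectrum.mem_iff, Matrix.isUnit_iff_isUnit_det, isUnit_iff_ne_zero, not_not,
      Matrix.det_fin_two]
    simp only [Matrix.algebraMap_matrix_apply, Matrix.sub_apply, Matrix.map_apply]
    norm_num
    constructor
    · intro h
      have : z * (z - (A.trace : ℂ)) = 0 := by rw [ht]; linear_combination h - hd
      rcases mul_eq_zero.mp this with h | h
      · exact Or.inl h
      · exact Or.inr (sub_eq_zero.mp h)
    · rintro (rfl | rfl) <;> [skip; rw [ht]] <;> linear_combination hd
  rw [specRad, spectralRadius, hspec]
  rw [show ({0, (A.trace : ℂ)} : Set ℂ) = insert 0 {(A.trace : ℂ)} from rfl]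
  rw [iSup_insert, iSup_singleton]
  simp [Complex.norm_real]
  rw [← Real.norm_eq_abs, ofReal_norm]; rfl

theorem stmt9 (S₁ S₂ : Matrix (Fin 2) (Fin 2) ℝ)
    (h₁ : S₁ = !![1, 1 / Real.sqrt 2; 0, 1])
    (h₂ : S₂ = !![1, Real.sqrt 3 / 2; -1, -(Real.sqrt 3 / 2)]) :
    S₂ = vecMulVec ![1, -1] ![1, Real.sqrt 3 / 2] ∧
    (∀ m : ℕ, 1 ≤ m → S₂ ^ m = (1 - Real.sqrt 3 / 2) ^ (m - 1) • S₂) ∧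
    (∀ ℓ m : ℕ, 1 ≤ ℓ → 1 ≤ m →
      specRad (S₁ ^ ℓ * S₂ ^ m) =
        ENNReal.ofReal
          (((ℓ : ℝ) / Real.sqrt 2 + Real.sqrt 3 / 2 - 1) *
            (1 - Real.sqrt 3 / 2) ^ (m - 1))) := by
  have s2 : Real.sqrt 2 * Real.sqrt 2 = 2 := Real.mul_self_sqrt (by norm_num)
  have s3 : Real.sqrt 3 * Real.sqrt 3 = 3 := Real.mul_self_sqrt (by norm_num)
  have s2pos : 0 < Real.sqrt 2 := Real.sqrt_pos.mpr (by norm_num)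
  have s3pos : 0 < Real.sqrt 3 := Real.sqrt_pos.mpr (by norm_num)
  set b : ℝ := Real.sqrt 3 / 2 with hb
  set c : ℝ := 1 - b with hc
  have hcpos : 0 < c := by
    have : Real.sqrt 3 < 2 := by nlinarith
    simp only [hc, hb]; linarith
  -- square of S₂
  have hsq : S₂ * S₂ = c • S₂ := by
    rw [h₂]
    ext i j
    fin_cases i <;> fin_cases j <;>
      simp [Matrix.mul_apply, Fin.sum_univ_two, hc, hb] <;> nlinarith [s3]
  -- power formula
  have hpow2 : ∀ m : ℕ, 1 ≤ m → S₂ ^ m = c ^ (m - 1) • S₂ := by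
    intro m hm
    obtain ⟨k, rfl⟩ := Nat.exists_eq_add_of_le hm
    induction k with
    | zero => simp
    | succ k ih =>
        have : (1 + (k + 1)) = (1 + k) + 1 := by ring
        rw [this, pow_succ, ih (by omega), smul_mul_assoc, hsq, smul_smul]
        rw [← pow_succ]
        congr 2
        omega
  refine ⟨?_, hpow2, ?_⟩
  · rw [h₂]
    ext i j
    fin_cases i <;> fin_cases j <;> simp [vecMulVec_apply] <;> ring
  · intro ℓ m hℓ hm
    -- powers of S₁
    have hpow1 : ∀ n : ℕ, S₁ ^ n = !![1, (n : ℝ) / Real.sqrt 2; 0, 1] := by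
      intro n
      induction n with
      | zero => simp [Matrix.one_fin_two]
      | succ n ih =>
          rw [pow_succ, ih, h₁]
          ext i j
          fin_cases i <;> fin_cases j <;>
            simp [Matrix.mul_apply, Fin.sum_univ_two] <;> push_cast <;> ring
    set a : ℝ := (ℓ : ℝ) / Real.sqrt 2 with ha
    have hA' : S₁ ^ ℓ * S₂ = !![1 - a, b - a * b; -1, -b] := by
      rw [hpow1, h₂]
      ext i j
      fin_cases i <;> fin_cases j <;>
        simp [Matrix.mul_apply, Fin.sum_univ_two, ha, hb] <;> ring
    have hA : S₁ ^ ℓ * S₂ ^ m = c ^ (m - 1) • !![1 - a, b - a * b; -1, -b] := by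
      rw [hpow2 m hm, mul_smul_comm, hA']
    have hdet : (S₁ ^ ℓ * S₂ ^ m).det = 0 := by
      rw [hA, Matrix.det_smul, Matrix.det_fin_two_of]
      ring
    have htr : (S₁ ^ ℓ * S₂ ^ m).trace = c ^ (m - 1) * ((1 - a) + (-b)) := by
      rw [hA, Matrix.trace_smul, Matrix.trace_fin_two_of]
      simp [smul_eq_mul]
    rw [specRad_fin_two_of_det_eq_zero _ hdet, htr]
    have hapos : Real.sqrt 2 / 2 ≤ a := by
      rw [ha, div_le_div_iff₀ (by norm_num) s2pos]
      have : (1 : ℝ) ≤ (ℓ : ℝ) := by exact_mod_cast hℓ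
      nlinarith
    have hab : 0 < a + b - 1 := by
      have h1 : Real.sqrt 2 + Real.sqrt 3 > 2 := by
        nlinarith [sq_nonneg (Real.sqrt 2 - 1.4), sq_nonneg (Real.sqrt 3 - 1.7)]
      simp only [hb] at *
      linarith
    have hcp : (0 : ℝ) ≤ c ^ (m - 1) := le_of_lt (pow_pos hcpos _)
    have : c ^ (m - 1) * ((1 - a) + (-b)) ≤ 0 := by nlinarith
    rw [abs_of_nonpos this]
    congr 1
    ring
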